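/- Under the stated geometric assumptions, let U ∈ SO(3) be the matrix with columns s₁₂, s₁₂₃/‖s₁₂₃‖, (s₁₂ × s₁₂₃)/‖s₁₂ × s₁₂₃‖, let G = diag(kᵅ, kᵝ, 0), and set F = 2G and P = Uᵀ R₁ Q^d₂₁ R₂ᵀ U ∈ SO(3). Then the configuration error function satisfies Ψ₁₂ = (1/2) tr[F(I − P)], and the vector e_P = (1/2)(FP − PᵀF)^∨ satisfies e_P = Uᵀ R₂ Q^d₁₂ e₁₂; in particular ‖e_P‖ = ‖e₁₂‖. -/

import Mathlib

noncomputable section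
open Matrix

/-- Vectors in ℝ³ with the Euclidean norm. -/
abbrev V3 : Type := EuclideanSpace ℝ (Fin 3)

/-- Real 3×3 matrices. -/
abbrev M3 : Type := Matrix (Fin 3) (Fin 3) ℝ

/-- The special orthogonal group SO(3): RᵀR = I and det R = 1. -/
def SO3 (R : M3) : Prop := Rᵀ * R = 1 ∧ R.det = 1

/-- Action of a matrix on a vector. -/
def matVec (A : M3) (v : V3) : V3 := WithLp.toLp 2 (A.mulVec v)

/-- Cross product on ℝ³. -/
def cross3 (u v : V3) : V3 :=
  WithLp.toLp 2 ![u 1 * v 2 - u 2 * v 1, u 2 * v 0 - u 0 * v 2, u 0 * v 1 - u 1 * v 0]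

/-- The hat map: x̂ y = x × y. -/
def hat (x : V3) : M3 :=
  !![0, -x 2, x 1; x 2, 0, -x 0; -x 1, x 0, 0]

/-- The vee map, inverse of the hat map on skew-symmetric matrices. -/
def vee (A : M3) : V3 := WithLp.toLp 2 ![A 2 1, A 0 2, A 1 0]

/-- Dot product on ℝ³. -/
def dot3 (u v : V3) : ℝ := u 0 * v 0 + u 1 * v 1 + u 2 * v 2

attribute [local instance] Matrix.normedAddCommGroup Matrix.normedSpace

-- basic SO3 lemmas
lemma SO3.mulRT {R : M3} (h : SO3 R) : R * Rᵀ = 1 := by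
  rw [mul_eq_one_comm]; exact h.1

lemma SO3.transpose {R : M3} (h : SO3 R) : SO3 Rᵀ := by
  refine ⟨?_, ?_⟩
  · rw [Matrix.transpose_transpose]; exact h.mulRT
  · rw [Matrix.det_transpose]; exact h.2

lemma SO3.mul {A B : M3} (hA : SO3 A) (hB : SO3 B) : SO3 (A * B) := by
  refine ⟨?_, ?_⟩
  · rw [Matrix.transpose_mul]
    have : Bᵀ * Aᵀ * (A * B) = Bᵀ * (Aᵀ * A) * B := by
      simp only [Matrix.mul_assoc]
    rw [this, hA.1, mul_one, hB.1]
  · rw [Matrix.det_mul, hA.2, hB.2, one_mul]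

-- matVec algebra
lemma matVec_mul (A B : M3) (v : V3) : matVec (A * B) v = matVec A (matVec B v) := by
  simp [matVec, Matrix.mulVec_mulVec]

lemma matVec_one (v : V3) : matVec 1 v = v := by simp [matVec]

lemma matVec_smul (A : M3) (c : ℝ) (v : V3) : matVec A (c • v) = c • matVec A v := by
  ext i
  simp [matVec, Matrix.mulVec, dotProduct, Fin.sum_univ_three, PiLp.smul_apply,
    smul_eq_mul]
  ring

lemma matVec_add (A : M3) (u v : V3) : matVec A (u + v) = matVec A u + matVec A v := by
  ext i
  simp [matVec, Matrix.mulVec, dotProduct, Fin.sum_univ_three, PiLp.add_apply]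
  ring

lemma matVec_neg (A : M3) (v : V3) : matVec A (-v) = -matVec A v := by
  ext i
  simp [matVec, Matrix.mulVec, dotProduct, Fin.sum_univ_three, PiLp.neg_apply]

lemma dot3_comm (u v : V3) : dot3 u v = dot3 v u := by simp [dot3]; ring

lemma dot3_matVec (A : M3) (u v : V3) : dot3 u (matVec A v) = dot3 (matVec Aᵀ u) v := by
  simp [dot3, matVec, Matrix.mulVec, dotProduct, Fin.sum_univ_three, Matrix.transpose_apply]
  ring

lemma dot3_smul_right (c : ℝ) (u v : V3) : dot3 u (c • v) = c * dot3 u v := by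
  simp [dot3, PiLp.smul_apply, smul_eq_mul]; ring

lemma dot3_smul_left (c : ℝ) (u v : V3) : dot3 (c • u) v = c * dot3 u v := by
  simp [dot3, PiLp.smul_apply, smul_eq_mul]; ring

lemma dot3_neg_right (u v : V3) : dot3 u (-v) = -dot3 u v := by
  simp [dot3]
  ring

-- cross3 lemmas
lemma cross3_anticomm (u v : V3) : cross3 u v = -cross3 v u := by
  ext i; fin_cases i <;> simp [cross3] <;> ring

lemma cross3_smul_smul (c d : ℝ) (u v : V3) :
    cross3 (c • u) (d • v) = (c * d) • cross3 u v := by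
  ext i; fin_cases i <;> simp [cross3, PiLp.smul_apply, smul_eq_mul] <;> ring

lemma cross3_neg_right (u v : V3) : cross3 u (-v) = -cross3 u v := by
  ext i; fin_cases i <;> simp [cross3] <;> ring

-- norm via dot3
lemma norm_eq_sqrt_dot3 (v : V3) : ‖v‖ = Real.sqrt (dot3 v v) := by
  rw [EuclideanSpace.norm_eq]
  congr 1
  simp [dot3, Fin.sum_univ_three, Real.norm_eq_abs, sq_abs]
  ring

lemma dot3_matVec_same {R : M3} (h : Rᵀ * R = 1) (u v : V3) :
    dot3 (matVec R u) (matVec R v) = dot3 u v := by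
  rw [dot3_matVec, ← matVec_mul, h, matVec_one]

lemma norm_matVec {R : M3} (h : Rᵀ * R = 1) (v : V3) : ‖matVec R v‖ = ‖v‖ := by
  rw [norm_eq_sqrt_dot3, norm_eq_sqrt_dot3, dot3_matVec_same h]

lemma cross3_matVec_adj (A : M3) (u v : V3) :
    cross3 (matVec A u) (matVec A v) = matVec (Matrix.adjugate A)ᵀ (cross3 u v) := by
  ext i
  rw [Matrix.adjugate_fin_three]
  fin_cases i <;>
    simp [cross3, matVec, Matrix.mulVec, dotProduct, Fin.sum_univ_three,
      Matrix.transpose_apply] <;> ring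

lemma SO3.adjugate {R : M3} (h : SO3 R) : Matrix.adjugate R = Rᵀ := by
  have h1 : Matrix.adjugate R = (Rᵀ * R) * Matrix.adjugate R := by rw [h.1, one_mul]
  rw [Matrix.mul_assoc, Matrix.mul_adjugate, h.2, one_smul, mul_one] at h1
  exact h1

lemma cross3_matVec {R : M3} (h : SO3 R) (u v : V3) :
    cross3 (matVec R u) (matVec R v) = matVec R (cross3 u v) := by
  rw [cross3_matVec_adj, h.adjugate, Matrix.transpose_transpose]

lemma matVec_cross3 {R : M3} (h : SO3 R) (u v : V3) :
    matVec R (cross3 u v) = cross3 (matVec R u) (matVec R v) :=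
  (cross3_matVec h u v).symm

def E0 : V3 := WithLp.toLp 2 ![1, 0, 0]
def E1 : V3 := WithLp.toLp 2 ![0, 1, 0]

/-- the configuration error function and error vector in terms of
F and P = Uᵀ R₁ Q^d₂₁ R₂ᵀ U. -/
theorem error_function_FP_form
    (s₁₂ s₁₃ s₂₁ s₂₃ : V3)
    (hs₁₂ : ‖s₁₂‖ = 1) (hs₁₃ : ‖s₁₃‖ = 1) (hs₂₁ : ‖s₂₁‖ = 1) (hs₂₃ : ‖s₂₃‖ = 1)
    (hopp : s₁₂ = -s₂₁)
    (s₁₂₃ s₂₁₃ : V3) (hs₁₂₃ : s₁₂₃ = cross3 s₁₂ s₁₃) (hs₂₁₃ : s₂₁₃ = cross3 s₂₁ s₂₃)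
    (h₁ : s₁₂₃ ≠ 0) (h₂ : s₂₁₃ ≠ 0)
    (hnormal : ‖s₂₁₃‖⁻¹ • s₂₁₃ = -(‖s₁₂₃‖⁻¹ • s₁₂₃))
    (R₁ R₂ : M3) (hR₁ : SO3 R₁) (hR₂ : SO3 R₂)
    (b₁₂ b₁₃ b₂₁ b₂₃ b₁₂₃ b₂₁₃ : V3)
    (hb₁₂ : b₁₂ = matVec R₁ᵀ s₁₂) (hb₁₃ : b₁₃ = matVec R₁ᵀ s₁₃)
    (hb₂₁ : b₂₁ = matVec R₂ᵀ s₂₁) (hb₂₃ : b₂₃ = matVec R₂ᵀ s₂₃)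
    (hb₁₂₃ : b₁₂₃ = cross3 b₁₂ b₁₃) (hb₂₁₃ : b₂₁₃ = cross3 b₂₁ b₂₃)
    (a₁₂ : ℝ) (ha₁₂ : a₁₂ = ‖b₂₁₃‖ * ‖b₁₂₃‖)
    (Qd₁₂ Qd₂₁ : M3) (hQd : SO3 Qd₁₂) (hQd₂₁ : Qd₂₁ = Qd₁₂ᵀ)
    (kα kβ : ℝ) (hkα : 0 < kα) (hkβ : 0 < kβ)
    (Ψ : ℝ)
    (hΨ : Ψ = kα * (1 + dot3 b₂₁ (matVec Qd₁₂ b₁₂))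
        + kβ * (1 + a₁₂⁻¹ * dot3 b₂₁₃ (matVec Qd₁₂ b₁₂₃)))
    (e₁₂ : V3)
    (he₁₂ : e₁₂ = kα • cross3 (matVec Qd₂₁ b₂₁) b₁₂
        + (kβ / a₁₂) • cross3 (matVec Qd₂₁ b₂₁₃) b₁₂₃)
    (U : M3) (hUSO : SO3 U)
    (hU : U = Matrix.of fun i j =>
      ![s₁₂, ‖s₁₂₃‖⁻¹ • s₁₂₃, ‖cross3 s₁₂ s₁₂₃‖⁻¹ • cross3 s₁₂ s₁₂₃] j i)
    (G F P : M3) (hG : G = Matrix.diagonal ![kα, kβ, 0])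
    (hF : F = (2 : ℝ) • G) (hP : P = Uᵀ * R₁ * Qd₂₁ * R₂ᵀ * U)
    (eP : V3) (heP : eP = (1 / 2 : ℝ) • vee (F * P - Pᵀ * F)) :
    SO3 P ∧ Ψ = (1 / 2) * Matrix.trace (F * (1 - P)) ∧
      eP = matVec (Uᵀ * R₂ * Qd₁₂) e₁₂ ∧ ‖eP‖ = ‖e₁₂‖ := by
  have hQd₂₁SO : SO3 Qd₂₁ := hQd₂₁ ▸ hQd.transpose
  -- P in terms of M
  set M : M3 := R₁ * Qd₂₁ * R₂ᵀ with hM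
  have hPM : P = Uᵀ * M * U := by rw [hP, hM]; simp only [Matrix.mul_assoc]
  have hPSO : SO3 P := by
    rw [hPM]
    exact ((hUSO.transpose.mul ((hR₁.mul hQd₂₁SO).mul hR₂.transpose))).mul hUSO
  -- column facts about U
  obtain ⟨n, hn⟩ : ∃ n : V3, n = ‖s₁₂₃‖⁻¹ • s₁₂₃ := ⟨_, rfl⟩
  have hU0 : ∀ k, U k 0 = s₁₂ k := by intro k; rw [hU]; rfl
  have hU1 : ∀ k, U k 1 = n k := by intro k; rw [hU, hn]; rfl
  -- vector relations
  have hR2b21 : matVec R₂ b₂₁ = s₂₁ := by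
    rw [hb₂₁, ← matVec_mul, hR₂.mulRT, matVec_one]
  have hs12b : s₁₂ = -(matVec R₂ b₂₁) := by rw [hR2b21]; exact hopp
  have hb123R : matVec R₁ᵀ s₁₂₃ = b₁₂₃ := by
    rw [hs₁₂₃, matVec_cross3 hR₁.transpose, ← hb₁₂, ← hb₁₃, ← hb₁₂₃]
  have hb213R : matVec R₂ᵀ s₂₁₃ = b₂₁₃ := by
    rw [hs₂₁₃, matVec_cross3 hR₂.transpose, ← hb₂₁, ← hb₂₃, ← hb₂₁₃]
  have hR2b213 : matVec R₂ b₂₁₃ = s₂₁₃ := by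
    rw [← hb213R, ← matVec_mul, hR₂.mulRT, matVec_one]
  have hn123 : ‖s₁₂₃‖ = ‖b₁₂₃‖ := by rw [← hb123R, norm_matVec hR₁.transpose.1]
  have hn213 : ‖s₂₁₃‖ = ‖b₂₁₃‖ := by rw [← hb213R, norm_matVec hR₂.transpose.1]
  have hR1Tn : matVec R₁ᵀ n = ‖b₁₂₃‖⁻¹ • b₁₂₃ := by
    rw [hn, matVec_smul, hb123R, hn123]
  have hnb : n = -(‖b₂₁₃‖⁻¹ • matVec R₂ b₂₁₃) := by
    rw [hn, hR2b213, ← hn213, hnormal, neg_neg]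
  have hR2Tn : matVec R₂ᵀ n = -(‖b₂₁₃‖⁻¹ • b₂₁₃) := by
    rw [hnb, matVec_neg, matVec_smul, ← matVec_mul, hR₂.1, matVec_one]
  -- diagonal entries of P
  have hP00 : P 0 0 = -dot3 b₂₁ (matVec Qd₁₂ b₁₂) := by
    have h1 : P 0 0 = dot3 s₁₂ (matVec M s₁₂) := by
      rw [hPM]
      simp [Matrix.mul_apply, Fin.sum_univ_three, dot3, matVec, Matrix.mulVec,
        dotProduct, Matrix.transpose_apply, hU0]
      ring
    rw [h1, hM, matVec_mul, matVec_mul, dot3_matVec, ← hb₁₂]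
    nth_rewrite 1 [hopp]
    rw [matVec_neg, ← hb₂₁, matVec_neg, dot3_neg_right, hQd₂₁, dot3_matVec,
      Matrix.transpose_transpose]
    rw [dot3_comm]
  have hP11 : P 1 1 = -(‖b₂₁₃‖⁻¹ * ‖b₁₂₃‖⁻¹ * dot3 b₂₁₃ (matVec Qd₁₂ b₁₂₃)) := by
    have h1 : P 1 1 = dot3 n (matVec M n) := by
      rw [hPM]
      simp [Matrix.mul_apply, Fin.sum_univ_three, dot3, matVec, Matrix.mulVec,
        dotProduct, Matrix.transpose_apply, hU1]
      ring
    rw [h1, hM, matVec_mul, matVec_mul, hR2Tn, matVec_neg, matVec_smul, matVec_neg,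
      matVec_smul, dot3_neg_right, dot3_smul_right, dot3_matVec, hR1Tn, dot3_smul_left,
      hQd₂₁, dot3_matVec, Matrix.transpose_transpose, dot3_comm]
    ring
  have hePfinal : eP = matVec (Uᵀ * R₂ * Qd₁₂) e₁₂ := by
    have heP1: eP = kα • cross3 (matVec Pᵀ E0) E0 + kβ • cross3 (matVec Pᵀ E1) E1 := by
      rw [heP, hF, hG]
      ext i
      fin_cases i <;>
        simp [vee, cross3, matVec, E0, E1, Matrix.mulVec, dotProduct,
          Fin.sum_univ_three, Matrix.sub_apply, Matrix.mul_apply, Matrix.smul_apply,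
          Matrix.diagonal, Matrix.of_apply, Matrix.transpose_apply, PiLp.add_apply,
          PiLp.smul_apply, smul_eq_mul] <;> ring
    have hUE0 : matVec U E0 = s₁₂ := by
      ext k
      simp [matVec, E0, Matrix.mulVec, dotProduct, Fin.sum_univ_three, hU0]
    have hUE1 : matVec U E1 = n := by
      ext k
      simp [matVec, E1, Matrix.mulVec, dotProduct, Fin.sum_univ_three, hU1]
    have hE0U : E0 = matVec Uᵀ s₁₂ := by
      rw [← hUE0, ← matVec_mul, hUSO.1, matVec_one]
    have hE1U : E1 = matVec Uᵀ n := by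
      rw [← hUE1, ← matVec_mul, hUSO.1, matVec_one]
    have hPT : Pᵀ = Uᵀ * Mᵀ * U := by
      rw [hPM]
      simp only [Matrix.transpose_mul, Matrix.transpose_transpose, Matrix.mul_assoc]
    have hPTE0 : matVec Pᵀ E0 = matVec Uᵀ (matVec Mᵀ s₁₂) := by
      rw [hPT, matVec_mul, matVec_mul, hUE0]
    have hPTE1 : matVec Pᵀ E1 = matVec Uᵀ (matVec Mᵀ n) := by
      rw [hPT, matVec_mul, matVec_mul, hUE1]
    have hterm0 : cross3 (matVec Pᵀ E0) E0 = matVec Uᵀ (cross3 (matVec Mᵀ s₁₂) s₁₂) := by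
      rw [matVec_cross3 hUSO.transpose, ← hPTE0, ← hE0U]
    have hterm1 : cross3 (matVec Pᵀ E1) E1 = matVec Uᵀ (cross3 (matVec Mᵀ n) n) := by
      rw [matVec_cross3 hUSO.transpose, ← hPTE1, ← hE1U]
    have heP2 : eP = matVec Uᵀ (kα • cross3 (matVec Mᵀ s₁₂) s₁₂
        + kβ • cross3 (matVec Mᵀ n) n) := by
      rw [heP1, hterm0, hterm1, matVec_add, matVec_smul, matVec_smul]
    have hMT : Mᵀ = R₂ * Qd₁₂ * R₁ᵀ := by
      rw [hM, hQd₂₁]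
      simp only [Matrix.transpose_mul, Matrix.transpose_transpose, Matrix.mul_assoc]
    have hkey : kα • cross3 (matVec Mᵀ s₁₂) s₁₂ + kβ • cross3 (matVec Mᵀ n) n
        = matVec (R₂ * Qd₁₂) e₁₂ := by
      have hM12 : matVec Mᵀ s₁₂ = matVec R₂ (matVec Qd₁₂ b₁₂) := by
        rw [hMT, matVec_mul, matVec_mul, ← hb₁₂]
      have t1 : cross3 (matVec Mᵀ s₁₂) s₁₂ = matVec R₂ (cross3 b₂₁ (matVec Qd₁₂ b₁₂)) := by
        rw [hM12, hs12b, cross3_neg_right, cross3_matVec hR₂, cross3_anticomm b₂₁,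
          matVec_neg]
      have hMn : matVec Mᵀ n = ‖b₁₂₃‖⁻¹ • matVec R₂ (matVec Qd₁₂ b₁₂₃) := by
        rw [hMT, matVec_mul, matVec_mul, hR1Tn, matVec_smul, matVec_smul]
      have t2 : cross3 (matVec Mᵀ n) n
          = (‖b₁₂₃‖⁻¹ * ‖b₂₁₃‖⁻¹) • matVec R₂ (cross3 b₂₁₃ (matVec Qd₁₂ b₁₂₃)) := by
        rw [hMn, hnb, cross3_neg_right, cross3_smul_smul, cross3_matVec hR₂,
          cross3_anticomm b₂₁₃, matVec_neg, smul_neg]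
      have q1 : matVec Qd₁₂ (cross3 (matVec Qd₂₁ b₂₁) b₁₂)
          = cross3 b₂₁ (matVec Qd₁₂ b₁₂) := by
        rw [matVec_cross3 hQd, ← matVec_mul, hQd₂₁, hQd.mulRT, matVec_one]
      have q2 : matVec Qd₁₂ (cross3 (matVec Qd₂₁ b₂₁₃) b₁₂₃)
          = cross3 b₂₁₃ (matVec Qd₁₂ b₁₂₃) := by
        rw [matVec_cross3 hQd, ← matVec_mul, hQd₂₁, hQd.mulRT, matVec_one]
      have hscal : kβ * (‖b₁₂₃‖⁻¹ * ‖b₂₁₃‖⁻¹) = kβ / a₁₂ := by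
        rw [ha₁₂, div_eq_mul_inv, mul_inv]; ring
      rw [he₁₂, matVec_mul, matVec_add, matVec_smul, matVec_smul, q1, q2,
        matVec_add, matVec_smul, matVec_smul, t1, t2, smul_smul, hscal]
    rw [heP2, hkey, ← matVec_mul]
    simp only [Matrix.mul_assoc]
  refine ⟨hPSO, ?_, ?_, ?_⟩
  · -- trace identity
    have htr : Matrix.trace (F * (1 - P)) =
        2 * kα * (1 - P 0 0) + 2 * kβ * (1 - P 1 1) := by
      rw [hF, hG]
      simp [Matrix.trace, Matrix.diag, Matrix.mul_apply, Fin.sum_univ_three,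
        Matrix.sub_apply, Matrix.one_apply, Matrix.diagonal, Matrix.smul_apply,
        Matrix.of_apply, smul_eq_mul]
    rw [hΨ, htr, hP00, hP11, ha₁₂, mul_inv]
    ring
  · -- eP identity
    exact hePfinal
  · rw [hePfinal, norm_matVec ((hUSO.transpose.mul hR₂).mul hQd).1]
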